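/- Let M = ℂ³ with coordinates (t₁,t₂,t₃) and fix p ∈ ℤ with p ≥ 2. The multiplication on TM given by unit e = ∂₁ and ∂₂∘∂₂ = p·t₂^{p−1}·∂₂, ∂₂∘∂₃ = 0, ∂₃∘∂₃ = 0 is associative, and the vector field E = (t₁+c₁)∂₁ + (1/p)t₂∂₂ + ε₃(t₃)∂₃ satisfies Lie_E(∘) = ∘ for any c₁ ∈ ℂ and ε₃ ∈ ℂ{t₃}; concretely, for all i,j ∈ {1,2,3}: [E, ∂ᵢ∘∂ⱼ] − [E,∂ᵢ]∘∂ⱼ − [E,∂ⱼ]∘∂ᵢ = ∂ᵢ∘∂ⱼ. -/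

import Mathlib

noncomputable section

/-- Formal (power series) functions of the coordinates `(t₁,t₂,t₃)` on `M = ℂ³`. -/
abbrev Rt : Type := MvPowerSeries (Fin 3) ℂ

/-- Partial derivative `∂/∂tⱼ` on `Rt`. -/
def pd (j : Fin 3) (f : Rt) : Rt :=
  fun m => ((m j : ℂ) + 1) * f (m + Finsupp.single j 1)

/-- Vector fields `X₁∂₁ + X₂∂₂ + X₃∂₃` are triples of functions. -/
abbrev VF : Type := Rt × Rt × Rt

/-- The multiplication `∘` on vector fields with unit `e = ∂₁`,
`∂₂∘∂₂ = p·t₂^(p−1)·∂₂`, `∂₂∘∂₃ = 0`, `∂₃∘∂₃ = 0`. -/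
def pMul (p : ℕ) (x y : VF) : VF :=
  (x.1 * y.1,
   x.1 * y.2.1 + x.2.1 * y.1 + (p : Rt) * MvPowerSeries.X 1 ^ (p - 1) * (x.2.1 * y.2.1),
   x.1 * y.2.2 + x.2.2 * y.1)

/-- The Lie bracket of vector fields: `[X,Y]ᵢ = Σⱼ (Xⱼ∂ⱼYᵢ − Yⱼ∂ⱼXᵢ)`. -/
def lieVF (x y : VF) : VF :=
  (x.1 * pd 0 y.1 + x.2.1 * pd 1 y.1 + x.2.2 * pd 2 y.1
     - (y.1 * pd 0 x.1 + y.2.1 * pd 1 x.1 + y.2.2 * pd 2 x.1),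
   x.1 * pd 0 y.2.1 + x.2.1 * pd 1 y.2.1 + x.2.2 * pd 2 y.2.1
     - (y.1 * pd 0 x.2.1 + y.2.1 * pd 1 x.2.1 + y.2.2 * pd 2 x.2.1),
   x.1 * pd 0 y.2.2 + x.2.1 * pd 1 y.2.2 + x.2.2 * pd 2 y.2.2
     - (y.1 * pd 0 x.2.2 + y.2.1 * pd 1 x.2.2 + y.2.2 * pd 2 x.2.2))

/-- A power series in the single variable `t₃`, viewed as an element of `Rt`. -/
def ofT3 (g : PowerSeries ℂ) : Rt :=
  fun m => if m 0 = 0 ∧ m 1 = 0 then PowerSeries.coeff (m 2) g else 0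

/-- The coordinate vector fields `∂₁, ∂₂, ∂₃`. -/
def Dv : Fin 3 → VF := ![(1, 0, 0), (0, 1, 0), (0, 0, 1)]

open MvPowerSeries

lemma coeff_pd (j : Fin 3) (f : Rt) (m : Fin 3 →₀ ℕ) :
    MvPowerSeries.coeff (R := ℂ) m (pd j f)
      = ((m j : ℂ) + 1) * MvPowerSeries.coeff (R := ℂ) (m + Finsupp.single j 1) f := rfl

lemma pd_C (j : Fin 3) (c : ℂ) : pd j ((MvPowerSeries.C (σ := Fin 3) (R := ℂ)) c) = 0 := by
  apply MvPowerSeries.ext; intro m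
  have h : m + Finsupp.single j 1 ≠ 0 := by
    intro h
    have := DFunLike.congr_fun h j
    simp [Finsupp.single_eq_same] at this
  rw [coeff_pd, MvPowerSeries.coeff_C, if_neg h, mul_zero, map_zero]

lemma pd_one (j : Fin 3) : pd j (1 : Rt) = 0 := by
  rw [← map_one ((MvPowerSeries.C (σ := Fin 3) (R := ℂ)))]; exact pd_C j 1

lemma pd_add (j : Fin 3) (f g : Rt) : pd j (f + g) = pd j f + pd j g := by
  apply MvPowerSeries.ext; intro m
  rw [map_add, coeff_pd, coeff_pd, coeff_pd, map_add]
  ring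

lemma pd_C_mul (j : Fin 3) (c : ℂ) (f : Rt) :
    pd j ((MvPowerSeries.C (σ := Fin 3) (R := ℂ)) c * f) = (MvPowerSeries.C (σ := Fin 3) (R := ℂ)) c * pd j f := by
  apply MvPowerSeries.ext; intro m
  rw [coeff_pd, MvPowerSeries.coeff_C_mul, MvPowerSeries.coeff_C_mul, coeff_pd]
  ring

lemma pd_X_pow (j i : Fin 3) (n : ℕ) :
    pd j ((MvPowerSeries.X i : Rt) ^ n)
      = if i = j then (n : Rt) * (MvPowerSeries.X i : Rt) ^ (n - 1) else 0 := by
  by_cases h : i = j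
  · subst h
    rw [if_pos rfl]
    cases n with
    | zero => rw [pow_zero, pd_one, Nat.cast_zero, zero_mul]
    | succ n =>
      apply MvPowerSeries.ext; intro m
      rw [show ((n + 1 : ℕ) : Rt) = (MvPowerSeries.C (σ := Fin 3) (R := ℂ)) ((n + 1 : ℕ) : ℂ) from
        (map_natCast ((MvPowerSeries.C (σ := Fin 3) (R := ℂ))) (n + 1)).symm]
      rw [coeff_pd, MvPowerSeries.coeff_X_pow, MvPowerSeries.coeff_C_mul,
        MvPowerSeries.coeff_X_pow, Nat.add_sub_cancel]
      have hc : (m + Finsupp.single i 1 = Finsupp.single i (n + 1))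
          ↔ m = Finsupp.single i n := by
        rw [show Finsupp.single i (n + 1) = Finsupp.single i n + Finsupp.single i 1 by
          rw [← Finsupp.single_add]]
        exact add_left_inj _
      rw [if_congr hc rfl rfl]
      by_cases hm : m = Finsupp.single i n
      · subst hm
        rw [Finsupp.single_eq_same]
        push_cast; ring
      · rw [if_neg hm]
        simp
  · rw [if_neg h]
    apply MvPowerSeries.ext; intro m
    have hc : m + Finsupp.single j 1 ≠ Finsupp.single i n := by
      intro hc
      have := DFunLike.congr_fun hc j
      rw [Finsupp.add_apply, Finsupp.single_eq_same, Finsupp.single_apply, if_neg h] at this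
      omega
    rw [coeff_pd, MvPowerSeries.coeff_X_pow, if_neg hc, mul_zero, map_zero]

lemma pd_X (j i : Fin 3) :
    pd j (MvPowerSeries.X i : Rt) = if i = j then 1 else 0 := by
  have := pd_X_pow j i 1
  simpa using this

lemma pd_ofT3_0 (g : PowerSeries ℂ) : pd 0 (ofT3 g) = 0 := by
  funext m
  show ((m 0 : ℂ) + 1) * ofT3 g (m + Finsupp.single 0 1) = 0
  have h : ¬((m + Finsupp.single 0 1 : Fin 3 →₀ ℕ) 0 = 0 ∧
      (m + Finsupp.single 0 1 : Fin 3 →₀ ℕ) 1 = 0) := by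
    simp [Finsupp.add_apply, Finsupp.single_eq_same]
  unfold ofT3
  rw [if_neg h, mul_zero]

lemma pd_ofT3_1 (g : PowerSeries ℂ) : pd 1 (ofT3 g) = 0 := by
  funext m
  show ((m 1 : ℂ) + 1) * ofT3 g (m + Finsupp.single 1 1) = 0
  have h : ¬((m + Finsupp.single 1 1 : Fin 3 →₀ ℕ) 0 = 0 ∧
      (m + Finsupp.single 1 1 : Fin 3 →₀ ℕ) 1 = 0) := by
    simp [Finsupp.add_apply, Finsupp.single_eq_same]
  unfold ofT3
  rw [if_neg h, mul_zero]


lemma pd_zero (j : Fin 3) : pd j (0 : Rt) = 0 := by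
  have := pd_C j 0; rwa [map_zero] at this

lemma pd_natCast_mul (j : Fin 3) (n : ℕ) (f : Rt) :
    pd j ((n : Rt) * f) = (n : Rt) * pd j f := by
  rw [show ((n : ℕ) : Rt) = (MvPowerSeries.C (σ := Fin 3) (R := ℂ)) ((n : ℕ) : ℂ) from
    (map_natCast ((MvPowerSeries.C (σ := Fin 3) (R := ℂ))) n).symm, pd_C_mul]

/-- On `M = ℂ³` with `p ≥ 2`, the multiplication with unit `e = ∂₁` and
`∂₂∘∂₂ = p·t₂^(p−1)·∂₂`, `∂₂∘∂₃ = 0`, `∂₃∘∂₃ = 0` is associative, and for any `c₁ ∈ ℂ`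
and any `ε₃ ∈ ℂ{t₃}` the vector field `E = (t₁+c₁)∂₁ + (1/p)t₂∂₂ + ε₃(t₃)∂₃`
satisfies `Lie_E(∘) = ∘`, i.e.
`[E, ∂ᵢ∘∂ⱼ] − [E,∂ᵢ]∘∂ⱼ − [E,∂ⱼ]∘∂ᵢ = ∂ᵢ∘∂ⱼ` for all `i,j`. -/
theorem pMul_assoc_and_euler (p : ℕ) (hp : 2 ≤ p) (c₁ : ℂ) (ε₃ : PowerSeries ℂ) :
    (∀ x y z : VF, pMul p (pMul p x y) z = pMul p x (pMul p y z)) ∧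
    (∀ i j : Fin 3,
      lieVF (MvPowerSeries.X 0 + MvPowerSeries.C c₁,
             MvPowerSeries.C ((p : ℂ)⁻¹) * MvPowerSeries.X 1, ofT3 ε₃)
          (pMul p (Dv i) (Dv j))
        - pMul p (lieVF (MvPowerSeries.X 0 + MvPowerSeries.C c₁,
             MvPowerSeries.C ((p : ℂ)⁻¹) * MvPowerSeries.X 1, ofT3 ε₃) (Dv i))
            (Dv j)
        - pMul p (lieVF (MvPowerSeries.X 0 + MvPowerSeries.C c₁,
             MvPowerSeries.C ((p : ℂ)⁻¹) * MvPowerSeries.X 1, ofT3 ε₃) (Dv j))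
            (Dv i)
      = pMul p (Dv i) (Dv j)) := by
  refine ⟨fun x y z => ?_, fun i j => ?_⟩
  · simp only [pMul, Prod.mk.injEq]
    refine ⟨by ring, by ring, by ring⟩
  · have hp0 : (p : ℂ) ≠ 0 := Nat.cast_ne_zero.mpr (by omega)
    have hCp : (MvPowerSeries.C (σ := Fin 3) (R := ℂ)) ((p : ℂ))⁻¹ * (MvPowerSeries.C (σ := Fin 3) (R := ℂ)) (p : ℂ)
        = 1 := by
      rw [← map_mul, inv_mul_cancel₀ hp0, map_one]
    have hXp : (MvPowerSeries.X 1 : Rt) * MvPowerSeries.X 1 ^ (p - 2)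
        = MvPowerSeries.X 1 ^ (p - 1) := by
      rw [show p - 1 = (p - 2) + 1 from by omega, pow_succ']
    fin_cases i <;> fin_cases j <;>
      simp [Dv, pMul, lieVF, pd_zero, pd_one, pd_add, pd_C, pd_C_mul,
        pd_natCast_mul, pd_X_pow, pd_X, pd_ofT3_0, pd_ofT3_1, Prod.ext_iff]
    rw [show p - 1 - 1 = p - 2 from by omega,
      show ((p : ℕ) : Rt) = (MvPowerSeries.C (σ := Fin 3) (R := ℂ)) (p : ℂ) from (map_natCast _ p).symm,
      show ((p - 1 : ℕ) : Rt) = (MvPowerSeries.C (σ := Fin 3) (R := ℂ)) (p : ℂ) - 1 from by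
        rw [← map_natCast ((MvPowerSeries.C (σ := Fin 3) (R := ℂ))) (p - 1),
          Nat.cast_sub (by omega : 1 ≤ p), Nat.cast_one, map_sub, map_one],
      ← hXp]
    linear_combination ((MvPowerSeries.C (σ := Fin 3) (R := ℂ)) (p : ℂ) * MvPowerSeries.X 1 *
      MvPowerSeries.X 1 ^ (p - 2)) * hCp

end
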